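/- Let p ≥ 3 be an odd natural number, μ ≥ 0, α > 0, and let (x, y) be a C¹ solution on [0, ∞) of the system x' = y, y' = -α x^p - μ y. Define ℰ(t) := (1/2) y(t)² + (μ/2) x(t) y(t) + (μ²/4) x(t)² + (α/(p+1)) x(t)^{p+1} and ℋ(t) := (μ/2) y(t)² + (μα/2) x(t)^{p+1}. Then ℰ'(t) + ℋ(t) = 0 for all t ≥ 0. -/
import Mathlib


open Set

/-- For a C¹ solution of the system `x' = y, y' = -α x^p - μ y`,
the modified energy `ℰ(t) = (1/2) y² + (μ/2) x y + (μ²/4) x² + (α/(p+1)) x^(p+1)`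
satisfies `ℰ'(t) + ℋ(t) = 0`, where `ℋ(t) = (μ/2) y² + (μα/2) x^(p+1)`,
i.e. `ℰ'(t) = -ℋ(t)`. -/
theorem duffing_modified_energy_derivative
    (p : ℕ) (hp : 3 ≤ p) (hodd : Odd p)
    (μ α : ℝ) (hμ : 0 ≤ μ) (hα : 0 < α)
    (x y : ℝ → ℝ)
    (hx : ∀ t ∈ Ici (0:ℝ), HasDerivWithinAt x (y t) (Ici 0) t)
    (hy : ∀ t ∈ Ici (0:ℝ),
      HasDerivWithinAt y (-α * x t ^ p - μ * y t) (Ici 0) t) :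
    ∀ t ∈ Ici (0:ℝ),
      HasDerivWithinAt
        (fun s => (1/2) * y s ^ 2 + (μ/2) * x s * y s + (μ^2/4) * x s ^ 2
          + (α / ((p : ℝ) + 1)) * x s ^ (p + 1))
        (-((μ/2) * y t ^ 2 + (μ * α / 2) * x t ^ (p + 1))) (Ici 0) t := by
  intro t ht
  have hx' := hx t ht
  have hy' := hy t ht
  have H : HasDerivWithinAt
      (fun s => (1/2) * y s ^ 2 + (μ/2) * x s * y s + (μ^2/4) * x s ^ 2
        + (α / ((p : ℝ) + 1)) * x s ^ (p + 1))
      ((1/2) * (2 * y t ^ 1 * (-α * x t ^ p - μ * y t))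
        + ((μ/2) * y t * y t + (μ/2) * x t * (-α * x t ^ p - μ * y t))
        + (μ^2/4) * (2 * x t ^ 1 * y t)
        + (α / ((p : ℝ) + 1)) * ((p + 1 : ℕ) * x t ^ p * y t)) (Ici 0) t := by
    exact (((hy'.pow 2).const_mul (1/2)).add
        (((hx'.const_mul (μ/2)).mul hy'))).add
        ((hx'.pow 2).const_mul (μ^2/4)) |>.add
        ((hx'.pow (p+1)).const_mul (α / ((p : ℝ) + 1)))
  convert H using 1
  have hne : ((p : ℝ) + 1) ≠ 0 := by positivity
  have hxp : x t ^ (p + 1) = x t ^ p * x t := pow_succ _ _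
  push_cast
  field_simp
  ring
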